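/- Let f : {−1,1}^n → ℝ with Fourier expansion f = Σ_S f̂(S) χ_S, let p be a polynomial of degree r with p(0)=0, written p(x) = Σ_{i=1}^r α_i C(x,i), and define g(x) = f(x) − Σ_{i=1}^r α_i Σ_{|S|=i} (∂f/∂x_S)(x) χ_S(x). Then g(x) = E[f] + Σ_{S ≠ ∅} (1 − p(|S|)) f̂(S) χ_S(x); in particular E_{x}[g(x)] = E[f] and Var_x[g(x)] = Σ_{ℓ=1}^n (1 − p(ℓ))² W^{=ℓ}[f]. -/

import Mathlib

def bval (b : Bool) : ℝ := if b then 1 else -1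

/-- The parity χ_S(x) = Π_{i∈S} x_i. -/
def chi {n : ℕ} (S : Finset (Fin n)) (x : Fin n → Bool) : ℝ := ∏ i ∈ S, bval (x i)

/-- Expectation over uniform x ∈ {−1,1}^n. -/
noncomputable def cubeMean (n : ℕ) (f : (Fin n → Bool) → ℝ) : ℝ :=
  (∑ x : Fin n → Bool, f x) / 2 ^ n

/-- Fourier coefficient f̂(S) = E_x[f(x) χ_S(x)]. -/
noncomputable def fhat (n : ℕ) (f : (Fin n → Bool) → ℝ) (S : Finset (Fin n)) : ℝ :=
  cubeMean n (fun x => f x * chi S x)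

/-- Fourier weight at level ℓ: W^{=ℓ}[f] = Σ_{|S|=ℓ} f̂(S)². -/
noncomputable def Wlevel (n : ℕ) (f : (Fin n → Bool) → ℝ) (ℓ : ℕ) : ℝ :=
  ∑ S ∈ Finset.powersetCard ℓ (Finset.univ : Finset (Fin n)), (fhat n f S) ^ 2

noncomputable def Dcoord {n : ℕ} (i : Fin n) (f : (Fin n → Bool) → ℝ) : (Fin n → Bool) → ℝ :=
  fun x => (f (Function.update x i true) - f (Function.update x i false)) / 2

/-- The iterated discrete derivative ∂f/∂x_S. -/
noncomputable def Dset {n : ℕ} (S : Finset (Fin n)) (f : (Fin n → Bool) → ℝ) :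
    (Fin n → Bool) → ℝ :=
  S.toList.foldr Dcoord f

/-- The generalized binomial coefficient C(x, i). -/
noncomputable def genBinom (x : ℝ) (i : ℕ) : ℝ :=
  (∏ j ∈ Finset.range i, (x - j)) / (Nat.factorial i)

open Finset
open scoped symmDiff

variable {n : ℕ}

lemma bval_mul_self (b : Bool) : bval b * bval b = 1 := by cases b <;> norm_num [bval]

lemma sum_chi (U : Finset (Fin n)) :
    ∑ x : Fin n → Bool, chi U x = if U = ∅ then (2:ℝ) ^ n else 0 := by
  have h : ∀ x : Fin n → Bool, chi U x = ∏ i : Fin n, (if i ∈ U then bval (x i) else 1) := by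
    intro x
    rw [chi]
    rw [Finset.prod_ite_mem Finset.univ U (fun i => bval (x i)), Finset.univ_inter]
  simp_rw [h]
  rw [← Fintype.piFinset_univ,
    ← Finset.prod_univ_sum (fun _ : Fin n => (Finset.univ : Finset Bool))
      (fun i b => if i ∈ U then bval b else 1)]
  have h2 : ∀ i : Fin n, (∑ b : Bool, (if i ∈ U then bval b else 1)) =
      if i ∈ U then 0 else 2 := by
    intro i
    by_cases hi : i ∈ U <;> simp [hi, bval]
  simp_rw [h2]
  by_cases hU : U = ∅
  · simp [hU]
  · rw [if_neg hU]
    obtain ⟨i, hi⟩ := Finset.nonempty_iff_ne_empty.2 hU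
    exact Finset.prod_eq_zero (Finset.mem_univ i) (by simp [hi])

lemma chi_mul (S T : Finset (Fin n)) (x : Fin n → Bool) :
    chi S x * chi T x = chi (S ∆ T) x := by
  have h1 : S ∪ T = (S ∆ T) ∪ (S ∩ T) := by
    ext a; simp [Finset.mem_symmDiff]; tauto
  have hd : Disjoint (S ∆ T) (S ∩ T) := by
    rw [Finset.disjoint_left]; intro a ha hb
    simp [Finset.mem_symmDiff] at ha hb; tauto
  have this : (∏ i ∈ S ∪ T, bval (x i)) * ∏ i ∈ S ∩ T, bval (x i)
      = (∏ i ∈ S, bval (x i)) * ∏ i ∈ T, bval (x i) := Finset.prod_union_inter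
  rw [chi, chi, chi, ← this, h1, Finset.prod_union hd, mul_assoc, ← Finset.prod_mul_distrib]
  rw [Finset.prod_congr rfl (fun i _ => bval_mul_self (x i)), Finset.prod_const_one, mul_one]

lemma mean_chi_mul (S T : Finset (Fin n)) :
    cubeMean n (fun x => chi S x * chi T x) = if S = T then 1 else 0 := by
  rw [cubeMean]
  simp_rw [chi_mul, sum_chi]
  by_cases h : S = T
  · simp [h, symmDiff_self, div_self (by positivity : (2:ℝ)^n ≠ 0)]
  · rw [if_neg (by simpa [symmDiff_eq_bot] using h), if_neg h, zero_div]

lemma sum_chi_chi (x y : Fin n → Bool) :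
    ∑ S : Finset (Fin n), chi S x * chi S y = if x = y then (2:ℝ) ^ n else 0 := by
  have h : ∀ S : Finset (Fin n), chi S x * chi S y
      = ∏ i ∈ S, (bval (x i) * bval (y i)) := by
    intro S; rw [chi, chi, Finset.prod_mul_distrib]
  simp_rw [h]
  rw [← Finset.powerset_univ]
  have key := Finset.prod_add (fun i : Fin n => bval (x i) * bval (y i)) (fun _ => (1:ℝ)) Finset.univ
  simp only [Finset.prod_const_one, mul_one] at key
  rw [← key]
  have h2 : ∀ i : Fin n, bval (x i) * bval (y i) + 1 = if x i = y i then 2 else 0 := by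
    intro i; cases hx : x i <;> cases hy : y i <;> norm_num [bval]
  simp_rw [h2]
  by_cases hxy : x = y
  · subst hxy; simp
  · rw [if_neg hxy]
    obtain ⟨i, hi⟩ : ∃ i, x i ≠ y i := Function.ne_iff.mp hxy
    exact Finset.prod_eq_zero (Finset.mem_univ i) (by simp [hi])


lemma fourier_inv (f : (Fin n → Bool) → ℝ) (x : Fin n → Bool) :
    f x = ∑ S : Finset (Fin n), fhat n f S * chi S x := by
  simp only [fhat, cubeMean]
  have step : ∀ S : Finset (Fin n), (∑ y : Fin n → Bool, f y * chi S y) / 2 ^ n * chi S x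
      = ∑ y : Fin n → Bool, f y * (chi S y * chi S x) / 2 ^ n := by
    intro S
    rw [div_mul_eq_mul_div, Finset.sum_mul, Finset.sum_div]
    simp_rw [mul_assoc]
  simp_rw [step]
  rw [Finset.sum_comm]
  have h : ∀ y : Fin n → Bool, ∑ S : Finset (Fin n), f y * (chi S y * chi S x) / 2 ^ n
      = f y * (if y = x then (1:ℝ) else 0) := by
    intro y
    rw [← Finset.sum_div, ← Finset.mul_sum, sum_chi_chi y x]
    by_cases hxy : y = x
    · rw [if_pos hxy, if_pos hxy, mul_div_assoc, div_self (by positivity : (2:ℝ)^n ≠ 0), mul_one]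
    · simp [hxy]
  simp_rw [h]
  simp

lemma Dcoord_chi (i : Fin n) (T : Finset (Fin n)) :
    Dcoord i (chi T) = if i ∈ T then chi (T.erase i) else fun _ => 0 := by
  funext x
  by_cases hi : i ∈ T
  · rw [if_pos hi, Dcoord]
    have key : ∀ b : Bool, chi T (Function.update x i b) = bval b * chi (T.erase i) x := by
      intro b
      rw [chi, ← Finset.mul_prod_erase T _ hi, Function.update_self]
      congr 1
      refine Finset.prod_congr rfl fun j hj => ?_
      rw [Function.update_of_ne (Finset.ne_of_mem_erase hj)]
    rw [key, key]
    norm_num [bval]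
  · rw [if_neg hi, Dcoord]
    have key : ∀ b : Bool, chi T (Function.update x i b) = chi T x := by
      intro b
      refine Finset.prod_congr rfl fun j hj => ?_
      have hji : j ≠ i := by rintro rfl; exact hi hj
      rw [Function.update_of_ne hji]
    rw [key, key, sub_self, zero_div]

lemma Dcoord_sum {ι : Type*} (A : Finset ι) (F : ι → (Fin n → Bool) → ℝ) (i : Fin n) :
    Dcoord i (fun x => ∑ T ∈ A, F T x) = fun x => ∑ T ∈ A, Dcoord i (F T) x := by
  funext x
  simp [Dcoord, ← Finset.sum_sub_distrib, Finset.sum_div]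

lemma foldr_Dcoord_sum (l : List (Fin n)) {ι : Type*} (A : Finset ι)
    (F : ι → (Fin n → Bool) → ℝ) :
    l.foldr Dcoord (fun x => ∑ T ∈ A, F T x) = fun x => ∑ T ∈ A, (l.foldr Dcoord (F T)) x := by
  induction l with
  | nil => rfl
  | cons a l ih => rw [List.foldr_cons, ih, Dcoord_sum]; rfl

lemma Dcoord_smul (c : ℝ) (h : (Fin n → Bool) → ℝ) (i : Fin n) :
    Dcoord i (fun x => c * h x) = fun x => c * Dcoord i h x := by
  funext x; simp [Dcoord]; ring

lemma foldr_Dcoord_smul (l : List (Fin n)) (c : ℝ) (h : (Fin n → Bool) → ℝ) :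
    l.foldr Dcoord (fun x => c * h x) = fun x => c * (l.foldr Dcoord h) x := by
  induction l with
  | nil => rfl
  | cons a l ih => rw [List.foldr_cons, ih, Dcoord_smul]; rfl

lemma foldr_Dcoord_chi (l : List (Fin n)) (hl : l.Nodup) (T : Finset (Fin n)) :
    l.foldr Dcoord (chi T) = if l.toFinset ⊆ T then chi (T \ l.toFinset) else fun _ => 0 := by
  induction l with
  | nil => simp
  | cons a l ih =>
    obtain ⟨ha, hl'⟩ := List.nodup_cons.mp hl
    rw [List.foldr_cons, ih hl']
    by_cases hsub : l.toFinset ⊆ T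
    · rw [if_pos hsub, Dcoord_chi]
      have hmem : a ∈ T \ l.toFinset ↔ a ∈ T := by
        simp only [Finset.mem_sdiff, List.mem_toFinset, and_iff_left_iff_imp]
        exact fun _ => ha
      by_cases haT : a ∈ T
      · rw [if_pos (hmem.mpr haT)]
        have h1 : (a :: l).toFinset ⊆ T := by
          simp only [List.toFinset_cons, Finset.insert_subset_iff]; exact ⟨haT, hsub⟩
        rw [if_pos h1]
        rw [List.toFinset_cons, Finset.sdiff_insert]
      · rw [if_neg (fun h => haT (hmem.mp h))]
        rw [if_neg (fun h => haT (h (by simp)))]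
    · rw [if_neg hsub]
      rw [if_neg (fun h => hsub (Finset.Subset.trans (by simp [Finset.subset_insert]) h))]
      funext x; simp [Dcoord]

lemma Dset_eq (f : (Fin n → Bool) → ℝ) (S : Finset (Fin n)) :
    Dset S f = fun x => ∑ T : Finset (Fin n),
      fhat n f T * (if S ⊆ T then chi (T \ S) x else 0) := by
  have hf : f = fun x => ∑ T : Finset (Fin n), (fun y => fhat n f T * chi T y) x :=
    funext (fourier_inv f)
  rw [Dset]
  conv_lhs => rw [hf]
  rw [foldr_Dcoord_sum]
  funext x
  refine Finset.sum_congr rfl fun T _ => ?_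
  rw [foldr_Dcoord_smul, foldr_Dcoord_chi _ S.nodup_toList, Finset.toList_toFinset]
  by_cases h : S ⊆ T <;> simp [h]

lemma Dset_mul_chi (f : (Fin n → Bool) → ℝ) (S : Finset (Fin n)) (x : Fin n → Bool) :
    Dset S f x * chi S x
      = ∑ T : Finset (Fin n), (if S ⊆ T then fhat n f T * chi T x else 0) := by
  rw [Dset_eq, Finset.sum_mul]
  refine Finset.sum_congr rfl fun T _ => ?_
  by_cases h : S ⊆ T
  · rw [if_pos h, if_pos h, mul_assoc]
    congr 1
    rw [chi_mul]
    congr 1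
    ext a
    simp only [Finset.mem_symmDiff, Finset.mem_sdiff]
    constructor
    · rintro (⟨⟨h1, _⟩, _⟩ | ⟨h1, h2⟩)
      · exact h1
      · exact h h1
    · intro ha
      by_cases haS : a ∈ S
      · right; exact ⟨haS, fun hc => hc.2 haS⟩
      · left; exact ⟨⟨ha, haS⟩, haS⟩
  · simp [h]

lemma genBinom_nat (m i : ℕ) :
    (∏ j ∈ Finset.range i, ((m:ℝ) - j)) / (Nat.factorial i) = (m.choose i : ℝ) := by
  have key : ∏ j ∈ Finset.range i, ((m:ℝ) - j) = (m.descFactorial i : ℝ) := by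
    induction i with
    | zero => simp
    | succ k ih =>
      rcases le_or_gt k m with h | h
      · rw [Finset.prod_range_succ, ih, Nat.descFactorial_succ, Nat.cast_mul, mul_comm,
          Nat.cast_sub h]
      · have h0 : m.descFactorial k = 0 := Nat.descFactorial_eq_zero_iff_lt.mpr h
        have h1 : m.descFactorial (k+1) = 0 :=
          Nat.descFactorial_eq_zero_iff_lt.mpr (h.trans (Nat.lt_succ_self k))
        rw [Finset.prod_range_succ, ih, h0, h1]
        simp
  rw [key, Nat.descFactorial_eq_factorial_mul_choose, Nat.cast_mul, mul_comm, mul_div_assoc,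
    div_self (by exact_mod_cast Nat.factorial_ne_zero i), mul_one]

lemma cubeMean_sum {ι : Type*} (A : Finset ι) (F : ι → (Fin n → Bool) → ℝ) :
    cubeMean n (fun x => ∑ T ∈ A, F T x) = ∑ T ∈ A, cubeMean n (F T) := by
  simp only [cubeMean]
  rw [Finset.sum_comm, Finset.sum_div]

lemma cubeMean_smul (c : ℝ) (h : (Fin n → Bool) → ℝ) :
    cubeMean n (fun x => c * h x) = c * cubeMean n h := by
  simp only [cubeMean]
  rw [← Finset.mul_sum, mul_div_assoc]

lemma fhat_empty (f : (Fin n → Bool) → ℝ) : fhat n f ∅ = cubeMean n f := by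
  simp [fhat, chi]

/-- For p of degree r with p(0)=0, p(x) = Σ_{i=1}^r α_i C(x,i), and
g(x) = f(x) − Σ_{i=1}^r α_i Σ_{|S|=i} (∂f/∂x_S)(x) χ_S(x), we have
g(x) = E[f] + Σ_{S ≠ ∅} (1 − p(|S|)) f̂(S) χ_S(x); in particular E[g] = E[f] and
Var[g] = Σ_{ℓ=1}^n (1 − p(ℓ))² W^{=ℓ}[f]. -/
theorem stmt5 (n r : ℕ) (hr : 1 ≤ r) (f : (Fin n → Bool) → ℝ)
    (p : Polynomial ℝ) (hdeg : p.natDegree ≤ r) (h0 : p.eval 0 = 0)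
    (α : ℕ → ℝ)
    (hp : ∀ x : ℝ, p.eval x = ∑ i ∈ Finset.Icc 1 r, α i * genBinom x i)
    (g : (Fin n → Bool) → ℝ)
    (hg : ∀ x, g x = f x - ∑ i ∈ Finset.Icc 1 r, α i *
        ∑ S ∈ Finset.powersetCard i (Finset.univ : Finset (Fin n)), Dset S f x * chi S x) :
    (∀ x, g x = cubeMean n f +
        ∑ S ∈ (Finset.univ : Finset (Finset (Fin n))).erase ∅,
          (1 - p.eval (S.card : ℝ)) * fhat n f S * chi S x)
    ∧ cubeMean n g = cubeMean n f
    ∧ cubeMean n (fun x => (g x - cubeMean n g) ^ 2) =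
        ∑ ℓ ∈ Finset.Icc 1 n, (1 - p.eval (ℓ : ℝ)) ^ 2 * Wlevel n f ℓ := by
  classical
  set d : Finset (Fin n) → ℝ := fun T => (1 - p.eval (T.card : ℝ)) * fhat n f T with hd
  have hgb : ∀ (m i : ℕ), genBinom (m : ℝ) i = (m.choose i : ℝ) := by
    intro m i; rw [genBinom]; exact genBinom_nat m i
  -- full Fourier expansion of g
  have hgx : ∀ x, g x = ∑ T : Finset (Fin n), d T * chi T x := by
    intro x
    rw [hg x]
    have hsub : ∀ i : ℕ, (∑ S ∈ Finset.powersetCard i (Finset.univ : Finset (Fin n)),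
        Dset S f x * chi S x)
        = ∑ T : Finset (Fin n), (T.card.choose i : ℝ) * (fhat n f T * chi T x) := by
      intro i
      simp_rw [Dset_mul_chi f _ x]
      rw [Finset.sum_comm]
      refine Finset.sum_congr rfl fun T _ => ?_
      rw [Finset.sum_ite, Finset.sum_const_zero, add_zero, Finset.sum_const]
      have hfil : (Finset.powersetCard i (Finset.univ : Finset (Fin n))).filter
          (fun S => S ⊆ T) = Finset.powersetCard i T := by
        ext S
        simp only [Finset.mem_filter, Finset.mem_powersetCard]
        constructor
        · rintro ⟨⟨-, hc⟩, hsub⟩; exact ⟨hsub, hc⟩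
        · rintro ⟨hsub, hc⟩; exact ⟨⟨Finset.subset_univ S, hc⟩, hsub⟩
      rw [hfil, Finset.card_powersetCard, nsmul_eq_mul]
    simp_rw [hsub]
    have hswap : ∑ i ∈ Finset.Icc 1 r, α i *
        ∑ T : Finset (Fin n), (T.card.choose i : ℝ) * (fhat n f T * chi T x)
        = ∑ T : Finset (Fin n), p.eval (T.card : ℝ) * (fhat n f T * chi T x) := by
      simp_rw [Finset.mul_sum]
      rw [Finset.sum_comm]
      refine Finset.sum_congr rfl fun T _ => ?_
      rw [hp ((T.card : ℕ) : ℝ), Finset.sum_mul]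
      refine Finset.sum_congr rfl fun i _ => ?_
      rw [hgb T.card i]; ring
    rw [hswap]
    rw [fourier_inv f x, ← Finset.sum_sub_distrib]
    refine Finset.sum_congr rfl fun T _ => ?_
    rw [hd]; ring
  -- conjunct 1
  have h1 : ∀ x, g x = cubeMean n f +
      ∑ S ∈ (Finset.univ : Finset (Finset (Fin n))).erase ∅, d S * chi S x := by
    intro x
    rw [hgx x, ← Finset.sum_erase_add Finset.univ _ (Finset.mem_univ (∅ : Finset (Fin n)))]
    have hempty : d ∅ * chi ∅ x = cubeMean n f := by
      simp [hd, chi, fhat_empty, h0]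
    rw [hempty, add_comm]
  -- conjunct 2
  have hmc : ∀ T : Finset (Fin n), cubeMean n (chi T) = if T = ∅ then 1 else 0 := by
    intro T
    rw [cubeMean, sum_chi]
    by_cases h : T = ∅
    · simp [h, div_self (by positivity : (2:ℝ)^n ≠ 0)]
    · simp [h]
  have h2 : cubeMean n g = cubeMean n f := by
    have e1 : cubeMean n g = ∑ T : Finset (Fin n), d T * cubeMean n (chi T) := by
      calc cubeMean n g = cubeMean n (fun x => ∑ T : Finset (Fin n), d T * chi T x) :=
            congrArg _ (funext hgx)
        _ = ∑ T : Finset (Fin n), cubeMean n (fun x => d T * chi T x) := cubeMean_sum _ _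
        _ = ∑ T : Finset (Fin n), d T * cubeMean n (chi T) := by
            exact Finset.sum_congr rfl fun T _ => cubeMean_smul _ _
    rw [e1]
    simp_rw [hmc, mul_ite, mul_one, mul_zero]
    rw [Finset.sum_ite_eq' Finset.univ (∅ : Finset (Fin n)) d, if_pos (Finset.mem_univ _)]
    simp [hd, h0, fhat_empty]
  -- conjunct 3
  refine ⟨h1, h2, ?_⟩
  set A := (Finset.univ : Finset (Finset (Fin n))).erase ∅ with hA
  have hvar : ∀ x, g x - cubeMean n g = ∑ S ∈ A, d S * chi S x := by
    intro x
    rw [h1 x, h2, add_sub_cancel_left]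
  calc cubeMean n (fun x => (g x - cubeMean n g)^2)
      = cubeMean n (fun x => ∑ S ∈ A, ∑ S' ∈ A, (d S * d S') * (chi S x * chi S' x)) := by
        congr 1; funext x
        rw [hvar x, sq, Finset.sum_mul_sum]
        exact Finset.sum_congr rfl fun S _ => Finset.sum_congr rfl fun S' _ => by ring
    _ = ∑ S ∈ A, ∑ S' ∈ A, (d S * d S') * cubeMean n (fun x => chi S x * chi S' x) := by
        rw [cubeMean_sum]
        refine Finset.sum_congr rfl fun S _ => ?_
        rw [cubeMean_sum]
        exact Finset.sum_congr rfl fun S' _ => cubeMean_smul _ _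
    _ = ∑ S ∈ A, d S ^ 2 := by
        refine Finset.sum_congr rfl fun S hS => ?_
        simp_rw [mean_chi_mul, mul_ite, mul_one, mul_zero]
        rw [Finset.sum_ite_eq A S (fun S' => d S * d S'), if_pos hS, ← sq]
    _ = ∑ ℓ ∈ Finset.Icc 1 n, (1 - p.eval (ℓ : ℝ)) ^ 2 * Wlevel n f ℓ := by
        have hU : A = (Finset.Icc 1 n).biUnion
            (fun ℓ => Finset.powersetCard ℓ (Finset.univ : Finset (Fin n))) := by
          ext S
          simp only [hA, Finset.mem_erase, Finset.mem_univ, and_true, Finset.mem_biUnion,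
            Finset.mem_Icc, Finset.mem_powersetCard]
          constructor
          · intro hS
            exact ⟨S.card, ⟨Finset.card_pos.mpr (Finset.nonempty_iff_ne_empty.mpr hS),
              by simpa using Finset.card_le_univ S⟩, Finset.subset_univ S, rfl⟩
          · rintro ⟨ℓ, hℓ1, -, -, rfl⟩
            intro h
            rw [h] at hℓ1
            simp at hℓ1
        rw [hU, Finset.sum_biUnion]
        · refine Finset.sum_congr rfl fun ℓ _ => ?_
          rw [Wlevel, Finset.mul_sum]
          refine Finset.sum_congr rfl fun S hS => ?_
          have hc : S.card = ℓ := (Finset.mem_powersetCard.mp hS).2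
          rw [hd]
          simp only []
          rw [mul_pow, hc]
        · intro a _ b _ hab
          exact Finset.pairwise_disjoint_powersetCard Finset.univ hab
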